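/- arXiv:1903.00169 — 5 statements merged into one kernel-verified Lean document; each statement's English description precedes it below -/
import Mathlib

section
/- Let p be an odd prime and q = p^m. An element β of the finite field F_q with q elements is a nonzero square if and only if the field norm N(β) from F_q to F_p is a nonzero quadratic residue modulo p. -/
open Finset

variable (p m : ℕ) [Fact (Nat.Prime p)]

noncomputable def frobAlg : GaloisField p m ≃ₐ[ZMod p] GaloisField p m :=
  AlgEquiv.ofRingEquiv (f := frobeniusEquiv (GaloisField p m) p)
    (fun c => by rw [frobeniusEquiv_def, ← map_pow, ZMod.pow_card])

lemma frobAlg_pow_apply (i : ℕ) (x : GaloisField p m) :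
    (frobAlg p m ^ i) x = x ^ p ^ i := by
  induction i generalizing x with
  | zero => simp
  | succ n ih =>
    rw [pow_succ, AlgEquiv.mul_apply, ih]
    show ((frobAlg p m) x) ^ p ^ n = _
    show (x ^ p) ^ p ^ n = _
    rw [← pow_mul, ← pow_succ']

lemma norm_formula (hm : m ≠ 0) (β : GaloisField p m) :
    algebraMap (ZMod p) (GaloisField p m) (Algebra.norm (ZMod p) β)
      = β ^ (∑ i ∈ range m, p ^ i) := by
  have : Fintype (GaloisField p m) := Fintype.ofFinite _
  classical
  have : Fintype (GaloisField p m)ˣ := Fintype.ofFinite _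
  have hp1 : 1 < p := (Fact.out : p.Prime).one_lt
  have hq : Fintype.card (GaloisField p m) = p ^ m := by
    rw [← Nat.card_eq_fintype_card]; exact GaloisField.card p m hm
  set σ := frobAlg p m with hσ
  have hpow : ∀ i x, (σ ^ i) x = x ^ p ^ i := frobAlg_pow_apply p m
  have h1 : σ ^ m = 1 := by
    ext x
    rw [hpow, AlgEquiv.one_apply, ← hq]
    exact FiniteField.pow_card x
  have horder : orderOf σ = m := by
    obtain ⟨g, hg⟩ := IsCyclic.exists_generator (α := (GaloisField p m)ˣ)
    have hgord : orderOf g = p ^ m - 1 := by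
      rw [orderOf_eq_card_of_forall_mem_zpowers hg, Nat.card_units, GaloisField.card p m hm]
    set i := orderOf σ with hi
    have hdvd : i ∣ m := orderOf_dvd_of_pow_eq_one h1
    have hipos : 0 < i := orderOf_pos σ
    have h1le : 1 ≤ p ^ i := Nat.one_le_pow _ _ (by omega)
    have hfix : (g : GaloisField p m) ^ p ^ i = g := by
      have h2 := hpow i (g : GaloisField p m)
      rw [hi, pow_orderOf_eq_one σ] at h2
      simpa using h2.symm
    have hu : g ^ p ^ i = g := Units.ext (by rw [Units.val_pow_eq_pow_val]; exact hfix)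
    have hone : g ^ (p ^ i - 1) = 1 := by
      have : g ^ (p ^ i - 1) * g = 1 * g := by
        rw [one_mul, ← pow_succ, Nat.sub_add_cancel h1le, hu]
      exact mul_right_cancel this
    have hdvd2 : p ^ m - 1 ∣ p ^ i - 1 := hgord ▸ orderOf_dvd_of_pow_eq_one hone
    have hle : p ^ m - 1 ≤ p ^ i - 1 :=
      Nat.le_of_dvd (by have := Nat.one_lt_pow (by omega) hp1 (n := i); omega) hdvd2
    have : m ≤ i := by
      have hpm : p ^ m ≤ p ^ i := by
        have := Nat.one_le_pow m p (by omega); omega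
      exact (Nat.pow_le_pow_iff_right hp1).mp hpm
    have : i ≤ m := Nat.le_of_dvd (by omega) hdvd
    omega
  -- the automorphism group equals powers of σ
  have hcardG : Fintype.card (GaloisField p m ≃ₐ[ZMod p] GaloisField p m) = m := by
    rw [← Nat.card_eq_fintype_card, IsGalois.card_aut_eq_finrank, GaloisField.finrank p hm]
  have hbij : Function.Bijective (fun i : Fin m => σ ^ (i : ℕ)) := by
    rw [Fintype.bijective_iff_injective_and_card, hcardG, Fintype.card_fin]
    refine ⟨fun a b hab => ?_, rfl⟩
    have := pow_injOn_Iio_orderOf (x := σ)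
      (by rw [horder]; exact Set.mem_Iio.mpr a.2) (by rw [horder]; exact Set.mem_Iio.mpr b.2) hab
    exact Fin.ext this
  rw [Algebra.norm_eq_prod_automorphisms]
  rw [← Fintype.prod_bijective _ hbij _ (fun τ => τ β) (fun i => rfl)]
  simp_rw [hpow]
  rw [Finset.prod_pow_eq_pow_sum]
  · congr 1
    exact Fin.sum_univ_eq_sum_range _ m

theorem stmt_0 (p m : ℕ) [Fact (Nat.Prime p)] (hodd : p ≠ 2) (hm : m ≠ 0)
    (β : GaloisField p m) :
    (β ≠ 0 ∧ IsSquare β) ↔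
      (Algebra.norm (ZMod p) β ≠ 0 ∧ IsSquare (Algebra.norm (ZMod p) β)) := by
  have : Fintype (GaloisField p m) := Fintype.ofFinite _
  have hp : p.Prime := Fact.out
  have hp1 : 1 < p := hp.one_lt
  have hpodd : p % 2 = 1 := Nat.odd_iff.mp (hp.odd_of_ne_two hodd)
  have hinj : Function.Injective (algebraMap (ZMod p) (GaloisField p m)) :=
    (algebraMap (ZMod p) (GaloisField p m)).injective
  have hnorm0 : Algebra.norm (ZMod p) β = 0 ↔ β = 0 := Algebra.norm_eq_zero_iff
  have hq : Fintype.card (GaloisField p m) = p ^ m := by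
    rw [← Nat.card_eq_fintype_card]; exact GaloisField.card p m hm
  have hqodd : p ^ m % 2 = 1 := Nat.odd_iff.mp ((hp.odd_of_ne_two hodd).pow)
  have hcharL : ringChar (GaloisField p m) ≠ 2 := by
    rw [ringChar.eq (GaloisField p m) p]; exact hodd
  have hcharF : ringChar (ZMod p) ≠ 2 := by
    rw [ZMod.ringChar_zmod_n]; exact hodd
  constructor
  · rintro ⟨hβ, γ, rfl⟩
    exact ⟨fun h => hβ (hnorm0.mp h), ⟨Algebra.norm (ZMod p) γ, map_mul _ _ _⟩⟩
  · rintro ⟨hN, hsq⟩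
    have hβ : β ≠ 0 := fun h => hN (hnorm0.mpr h)
    refine ⟨hβ, ?_⟩
    rw [FiniteField.isSquare_iff hcharF hN] at hsq
    rw [FiniteField.isSquare_iff hcharL hβ]
    -- transfer the power condition
    have hd : (∑ i ∈ range m, p ^ i) * (p - 1) = p ^ m - 1 := by
      have hgeo := geom_sum_mul (p : ℤ) m
      have h1p : (1:ℕ) ≤ p := by omega
      have h1q : (1:ℕ) ≤ p ^ m := Nat.one_le_pow _ _ (by omega)
      zify [h1p, h1q]
      push_cast
      linarith [hgeo]
    set d := ∑ i ∈ range m, p ^ i with hdd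
    obtain ⟨k, hk⟩ : ∃ k, p - 1 = 2 * k := ⟨(p-1)/2, by omega⟩
    have hNpow : (Algebra.norm (ZMod p) β) ^ (Fintype.card (ZMod p) / 2) = 1 := hsq
    have hcardZ : Fintype.card (ZMod p) = p := ZMod.card p
    have hmap : algebraMap (ZMod p) (GaloisField p m) ((Algebra.norm (ZMod p) β) ^ (p / 2)) = 1 := by
      rw [hcardZ] at hNpow
      rw [hNpow, map_one]
    have hβpow : β ^ (d * (p / 2)) = 1 := by
      rw [map_pow, norm_formula p m hm, ← pow_mul] at hmap
      rw [hdd]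
      exact hmap
    have harith : d * (p / 2) = Fintype.card (GaloisField p m) / 2 := by
      rw [hq]
      have hp2 : p / 2 = k := by omega
      have h2 : d * (p - 1) = 2 * (d * k) := by rw [hk]; ring
      have h1q : (1:ℕ) ≤ p ^ m := Nat.one_le_pow _ _ (by omega)
      rw [hp2]
      set t := d * k with ht
      omega
    rw [← harith]
    exact hβpow
end

section
/- Let p be an odd prime, q = p^m, and set d = (q−1)/4 if q ≡ 1 (mod 4) and d = (q+1)/4 if q ≡ 3 (mod 4). Then every nonzero square in F_q can be written as an ordered sum of two nonzero squares in exactly d − 1 ways. -/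
open scoped Classical

theorem stmt_8 (p m : ℕ) (hp : p.Prime) (hodd : p ≠ 2) (hm : m ≠ 0)
    (F : Type) [Field F] [Fintype F] (hcard : Fintype.card F = p ^ m)
    (d : ℕ) (hd : d = if p ^ m % 4 = 1 then (p ^ m - 1) / 4 else (p ^ m + 1) / 4)
    (β : F) (hβ : β ≠ 0) (hβs : IsSquare β) :
    (Finset.univ.filter (fun xy : F × F =>
        xy.1 ≠ 0 ∧ IsSquare xy.1 ∧ xy.2 ≠ 0 ∧ IsSquare xy.2 ∧ xy.1 + xy.2 = β)).card
      = d - 1 := by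
  have hq3 : 3 ≤ p ^ m := le_trans (by have := hp.two_le; omega) (Nat.le_self_pow hm p)
  have hqodd : p ^ m % 2 = 1 := Nat.odd_iff.mp ((hp.odd_of_ne_two hodd).pow)
  have hF2 : ringChar F ≠ 2 := by
    intro h
    have := FiniteField.even_card_of_char_two h
    rw [hcard] at this; omega
  set χ := quadraticChar F with hχ
  -- the x-set
  set A : Finset F := Finset.univ.filter
      (fun x : F => x ≠ 0 ∧ IsSquare x ∧ β - x ≠ 0 ∧ IsSquare (β - x)) with hA
  have hcard1 : (Finset.univ.filter (fun xy : F × F =>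
        xy.1 ≠ 0 ∧ IsSquare xy.1 ∧ xy.2 ≠ 0 ∧ IsSquare xy.2 ∧ xy.1 + xy.2 = β)).card
      = A.card := by
    apply Finset.card_bij' (fun xy _ => xy.1) (fun x _ => (x, β - x))
    · intro a ha
      simp only [hA, Finset.mem_filter, Finset.mem_univ, true_and] at ha ⊢
      obtain ⟨h1, h2, h3, h4, h5⟩ := ha
      refine ⟨h1, h2, ?_, ?_⟩
      · rw [← h5]; simpa using h3
      · rw [← h5]; simpa using h4
    · intro a ha
      simp only [hA, Finset.mem_filter, Finset.mem_univ, true_and] at ha ⊢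
      obtain ⟨h1, h2, h3, h4⟩ := ha
      exact ⟨h1, h2, h3, h4, by ring⟩
    · intro a ha
      simp only [Finset.mem_filter, Finset.mem_univ, true_and] at ha
      obtain ⟨h1, h2, h3, h4, h5⟩ := ha
      ext <;> simp [← h5]
    · intro a ha; rfl
  rw [hcard1]
  -- character sum computation
  have hchi_beta : χ β = 1 := (quadraticChar_one_iff_isSquare hβ).mpr hβs
  have hsum1 : ∑ x : F, χ x = 0 := quadraticChar_sum_zero hF2
  have hsum2 : ∑ x : F, χ (β - x) = 0 := by
    rw [← Equiv.sum_comp (Equiv.subLeft β) (fun y => χ y)] at hsum1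
    simpa using hsum1
  have hjac : jacobiSum χ χ = - χ (-1) := by
    have h1 : χ⁻¹ = χ := (quadraticChar_isQuadratic F).inv
    have := jacobiSum_nontrivial_inv (quadraticChar_ne_one hF2)
    rwa [h1] at this
  have hsum3 : ∑ x : F, χ x * χ (β - x) = - χ (-1) := by
    rw [← Equiv.sum_comp (Equiv.mulLeft₀ β hβ) (fun x => χ x * χ (β - x))]
    have : ∀ t : F, χ (Equiv.mulLeft₀ β hβ t) * χ (β - Equiv.mulLeft₀ β hβ t)
        = (χ β * χ β) * (χ t * χ (1 - t)) := by
      intro t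
      have hbt : β - β * t = β * (1 - t) := by ring
      simp only [Equiv.mulLeft₀_apply, hbt, map_mul]
      ring
    rw [Finset.sum_congr rfl (fun t _ => this t)]
    rw [← Finset.mul_sum, hchi_beta]
    simpa [jacobiSum] using hjac
  -- pointwise identity
  have hpoint : ∀ x : F, (1 + χ x) * (1 + χ (β - x))
      = (if x ∈ A then (4 : ℤ) else 0) + (if x = 0 then 2 else 0)
        + (if x = β then 2 else 0) := by
    intro x
    by_cases h0 : x = 0
    · rw [if_neg (by simp [hA, h0]), if_pos h0, if_neg (by rw [h0]; exact fun h => hβ h.symm)]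
      rw [h0, sub_zero, quadraticChar_zero, hchi_beta]
      norm_num
    by_cases hb : x = β
    · rw [if_neg (by simp [hA, hb]), if_neg h0, if_pos hb, hb, sub_self,
        quadraticChar_zero, hchi_beta]
      norm_num
    · have hbx : β - x ≠ 0 := sub_ne_zero.mpr (fun h => hb h.symm)
      have hmem : x ∈ A ↔ IsSquare x ∧ IsSquare (β - x) := by
        simp [hA, h0, hbx]
      by_cases hx : IsSquare x
      · by_cases hy : IsSquare (β - x)
        · rw [if_pos (hmem.mpr ⟨hx, hy⟩), if_neg h0, if_neg hb,
            (quadraticChar_one_iff_isSquare h0).mpr hx,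
            (quadraticChar_one_iff_isSquare hbx).mpr hy]
          norm_num
        · rw [if_neg (fun h => hy (hmem.mp h).2), if_neg h0, if_neg hb,
            quadraticChar_neg_one_iff_not_isSquare.mpr hy]
          ring
      · rw [if_neg (fun h => hx (hmem.mp h).1), if_neg h0, if_neg hb,
          quadraticChar_neg_one_iff_not_isSquare.mpr hx]
        ring
  have hS : ∑ x : F, (1 + χ x) * (1 + χ (β - x)) = 4 * (A.card : ℤ) + 4 := by
    rw [Finset.sum_congr rfl (fun x _ => hpoint x)]
    rw [Finset.sum_add_distrib, Finset.sum_add_distrib]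
    rw [Finset.sum_ite_eq' Finset.univ (0 : F) (fun _ => (2 : ℤ)),
      Finset.sum_ite_eq' Finset.univ β (fun _ => (2 : ℤ))]
    simp only [Finset.mem_univ, if_true]
    have : ∑ x : F, (if x ∈ A then (4 : ℤ) else 0) = 4 * A.card := by
      rw [Finset.sum_ite_mem, Finset.univ_inter, Finset.sum_const, nsmul_eq_mul]
      ring
    rw [this]; ring
  have hS2 : ∑ x : F, (1 + χ x) * (1 + χ (β - x))
      = (Fintype.card F : ℤ) - χ (-1) := by
    have expand : ∀ x : F, (1 + χ x) * (1 + χ (β - x))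
        = 1 + χ x + χ (β - x) + χ x * χ (β - x) := by intro x; ring
    rw [Finset.sum_congr rfl (fun x _ => expand x)]
    rw [Finset.sum_add_distrib, Finset.sum_add_distrib, Finset.sum_add_distrib,
      hsum1, hsum2, hsum3, Finset.sum_const, Finset.card_univ, Nat.smul_one_eq_cast]
    ring
  -- value of χ(-1)
  have hq14 : p ^ m % 4 = 1 ∨ p ^ m % 4 = 3 := by omega
  have key : 4 * (A.card : ℤ) + 4 = (p ^ m : ℤ) - χ (-1) := by
    rw [← hS, hS2, hcard]; push_cast; ring
  have hn1 : (-1 : F) ≠ 0 := by norm_num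
  rcases hq14 with h4 | h4
  · have hsq : IsSquare (-1 : F) := by
      rw [FiniteField.isSquare_neg_one_iff, hcard, h4]; omega
    have : χ (-1) = 1 := (quadraticChar_one_iff_isSquare hn1).mpr hsq
    rw [this] at key
    rw [hd, if_pos h4]
    have h5 : 5 ≤ p ^ m := by omega
    omega
  · have hsq : ¬ IsSquare (-1 : F) := by
      rw [FiniteField.isSquare_neg_one_iff, hcard, h4]; simp
    have : χ (-1) = -1 := quadraticChar_neg_one_iff_not_isSquare.mpr hsq
    rw [this] at key
    rw [hd, if_neg (by omega)]
    omega
end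

section
/- Let p be an odd prime, q = p^m, and set d = (q−1)/4 if q ≡ 1 (mod 4) and d = (q+1)/4 if q ≡ 3 (mod 4). Then every non-square in F_q^* can be written as an ordered sum of two nonzero squares in exactly d ways. -/
open scoped Classical

theorem quadChar_inv_self (F : Type) [Field F] [Fintype F] [DecidableEq F] :
    (quadraticChar F)⁻¹ = quadraticChar F := by
  ext a
  rw [MulChar.inv_apply']
  have ha : (a : F) ≠ 0 := a.ne_zero
  have hinv : ((a : F)⁻¹) ≠ 0 := inv_ne_zero ha
  have : quadraticChar F (a : F)⁻¹ * quadraticChar F (a : F) = 1 := by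
    rw [← map_mul, inv_mul_cancel₀ ha, map_one]
  rcases quadraticChar_dichotomy (F := F) ha with h | h <;>
    rcases quadraticChar_dichotomy (F := F) hinv with h' | h' <;>
      rw [h, h'] at this ⊢ <;> norm_num at this

theorem jacobi_quad (F : Type) [Field F] [Fintype F] [DecidableEq F] (hF : ringChar F ≠ 2) :
    jacobiSum (quadraticChar F) (quadraticChar F) = - quadraticChar F (-1) := by
  have := jacobiSum_nontrivial_inv (quadraticChar_ne_one hF)
  rwa [quadChar_inv_self] at this

theorem stmt_9 (p m : ℕ) (hp : p.Prime) (hodd : p ≠ 2) (hm : m ≠ 0)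
    (F : Type) [Field F] [Fintype F] (hcard : Fintype.card F = p ^ m)
    (d : ℕ) (hd : d = if p ^ m % 4 = 1 then (p ^ m - 1) / 4 else (p ^ m + 1) / 4)
    (β : F) (hβ : β ≠ 0) (hβs : ¬ IsSquare β) :
    (Finset.univ.filter (fun xy : F × F =>
        xy.1 ≠ 0 ∧ IsSquare xy.1 ∧ xy.2 ≠ 0 ∧ IsSquare xy.2 ∧ xy.1 + xy.2 = β)).card
      = d := by
  have hF2 : ringChar F ≠ 2 := by
    obtain ⟨n, hn, hpow⟩ := FiniteField.card F (ringChar F)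
    intro h2
    rw [h2, hcard] at hpow
    have h1 : (2 : ℕ) ∣ p ^ m := hpow ▸ dvd_pow_self 2 (by exact_mod_cast n.pos.ne')
    exact hodd (((Nat.prime_dvd_prime_iff_eq Nat.prime_two hp).mp
      (Nat.prime_two.dvd_of_dvd_pow h1)).symm)
  set χ := quadraticChar F with hχdef
  set P : F → Prop := fun a => a ≠ 0 ∧ IsSquare a ∧ β - a ≠ 0 ∧ IsSquare (β - a) with hP
  set A : Finset F := Finset.univ.filter P with hA
  -- Step 1: bijection with A
  have hcards : (Finset.univ.filter (fun xy : F × F =>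
        xy.1 ≠ 0 ∧ IsSquare xy.1 ∧ xy.2 ≠ 0 ∧ IsSquare xy.2 ∧ xy.1 + xy.2 = β)).card
      = A.card := by
    apply Finset.card_nbij' (fun xy => xy.1) (fun a => (a, β - a))
    · intro xy hxy
      simp only [Finset.mem_coe, hA, hP, Finset.mem_filter, Finset.mem_univ, true_and] at hxy ⊢
      obtain ⟨h1, h2, h3, h4, h5⟩ := hxy
      exact ⟨h1, h2, by rw [← h5]; simpa using h3, by rw [← h5]; simpa using h4⟩
    · intro a ha
      simp only [Finset.mem_coe, hA, hP, Finset.mem_filter, Finset.mem_univ, true_and] at ha ⊢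
      exact ⟨ha.1, ha.2.1, ha.2.2.1, ha.2.2.2, by ring⟩
    · intro xy hxy
      obtain ⟨x, y⟩ := xy
      simp only [Finset.mem_coe, Finset.mem_filter, Finset.mem_univ, true_and] at hxy
      have h5 := hxy.2.2.2.2
      simp only [Prod.mk.injEq]
      exact ⟨trivial, by linear_combination -h5⟩
    · intro a ha
      rfl
  rw [hcards]
  -- values of χ
  have hχβ : χ β = -1 := quadraticChar_neg_one_iff_not_isSquare.mpr hβs
  -- Step 2: 4 * card = sum over univ
  have key : (4 : ℤ) * A.card = ∑ a : F, (1 + χ a) * (1 + χ (β - a)) := by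
    rw [← Finset.sum_filter_add_sum_filter_not Finset.univ P
      (fun a => (1 + χ a) * (1 + χ (β - a)))]
    have h1 : ∑ a ∈ Finset.univ.filter P, (1 + χ a) * (1 + χ (β - a)) = 4 * A.card := by
      rw [Finset.sum_congr rfl (g := fun _ => (4 : ℤ)) ?_, Finset.sum_const,
        nsmul_eq_mul, mul_comm]
      intro a ha
      simp only [hP, Finset.mem_filter, Finset.mem_univ, true_and] at ha
      rw [(quadraticChar_one_iff_isSquare ha.1).mpr ha.2.1,
        (quadraticChar_one_iff_isSquare ha.2.2.1).mpr ha.2.2.2]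
      norm_num
    have h2 : ∑ a ∈ Finset.univ.filter (fun a => ¬ P a), (1 + χ a) * (1 + χ (β - a)) = 0 := by
      apply Finset.sum_eq_zero
      intro a ha
      simp only [hP, Finset.mem_filter, Finset.mem_univ, true_and] at ha
      by_cases h0 : a = 0
      · subst h0
        rw [χ.map_zero, sub_zero, hχβ]; ring
      by_cases hb0 : β - a = 0
      · have : a = β := by linear_combination -hb0
        subst this
        rw [hb0, χ.map_zero, hχβ]; ring
      push_neg at ha
      rcases Classical.em (IsSquare a) with hs | hs
      · have := ha h0 hs hb0
        rw [quadraticChar_neg_one_iff_not_isSquare.mpr this]; ring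
      · rw [quadraticChar_neg_one_iff_not_isSquare.mpr hs]; ring
    rw [h1, h2, add_zero]
  -- Step 3: compute the sum
  have s1 : ∑ a : F, χ a = 0 := quadraticChar_sum_zero hF2
  have s2 : ∑ a : F, χ (β - a) = 0 := by
    rw [← Equiv.sum_comp (Equiv.subLeft β) (fun a => χ a)] at s1
    simpa using s1
  have s3 : ∑ a : F, χ a * χ (β - a) = - χ (-1) := by
    have hre : ∑ a : F, χ a * χ (β - a)
        = ∑ x : F, χ (β * x) * χ (β - β * x) := by
      rw [← Equiv.sum_comp (Equiv.mulLeft₀ β hβ) (fun a => χ a * χ (β - a))]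
      rfl
    have hterm : ∀ x : F, χ (β * x) * χ (β - β * x)
        = (χ β * χ β) * (χ x * χ (1 - x)) := by
      intro x
      have : β - β * x = β * (1 - x) := by ring
      rw [this, map_mul, map_mul]; ring
    have hββ : χ β * χ β = 1 := by
      have := quadraticChar_sq_one (F := F) hβ
      rwa [sq] at this
    rw [hre]
    simp_rw [hterm]
    rw [← Finset.mul_sum, hββ, one_mul]
    exact jacobi_quad F hF2
  have expand : ∑ a : F, (1 + χ a) * (1 + χ (β - a)) = ((p ^ m : ℕ) : ℤ) - χ (-1) := by
    have e1 : ∀ a : F, (1 + χ a) * (1 + χ (β - a))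
        = 1 + χ a + χ (β - a) + χ a * χ (β - a) := fun a => by ring
    simp_rw [e1]
    rw [Finset.sum_add_distrib, Finset.sum_add_distrib, Finset.sum_add_distrib,
      s1, s2, s3, Finset.sum_const, Finset.card_univ, hcard]
    push_cast; ring
  -- Step 4: arithmetic
  have hχ4 : χ (-1) = ZMod.χ₄ (Fintype.card F) := quadraticChar_neg_one hF2
  have hqodd : p ^ m % 2 = 1 := Nat.odd_iff.mp ((hp.odd_of_ne_two hodd).pow)
  have hq1 : 1 ≤ p ^ m := Nat.one_le_pow _ _ hp.pos
  by_cases hmod : p ^ m % 4 = 1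
  · have : ZMod.χ₄ (Fintype.card F) = 1 := by
      rw [hcard]; exact ZMod.χ₄_nat_one_mod_four hmod
    rw [this] at hχ4
    rw [expand, hχ4] at key
    rw [hd, if_pos hmod]
    clear hd hcard expand
    generalize hgen : p ^ m = q at hmod hqodd hq1 key ⊢
    omega
  · have hmod3 : p ^ m % 4 = 3 := by omega
    have : ZMod.χ₄ (Fintype.card F) = -1 := by
      rw [hcard]; exact ZMod.χ₄_nat_three_mod_four hmod3
    rw [this] at hχ4
    rw [expand, hχ4] at key
    rw [hd, if_neg hmod]
    clear hd hcard expand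
    generalize hgen : p ^ m = q at hmod3 hqodd hq1 key ⊢
    omega
end

section
/- Let p be an odd prime, q = p^m, and set d = (q−1)/4 if q ≡ 1 (mod 4) and d = (q+1)/4 if q ≡ 3 (mod 4). Then every nonzero element of F_q can be written as an ordered sum of a nonzero square and a non-square (in either order) in exactly q − 1 − 2d ways. -/
open scoped Classical

open Finset

lemma mixed_iff {F : Type} [Field F] [Fintype F] [DecidableEq F] {a b : F}
    (ha : a ≠ 0) (hb : b ≠ 0) :
    quadraticChar F a * quadraticChar F b = -1 ↔
      ((IsSquare a ∧ ¬ IsSquare b) ∨ (¬ IsSquare a ∧ IsSquare b)) := by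
  rcases quadraticChar_dichotomy ha with h1 | h1 <;>
  rcases quadraticChar_dichotomy hb with h2 | h2 <;>
    simp [h1, h2, ← quadraticChar_one_iff_isSquare ha, ← quadraticChar_one_iff_isSquare hb]

theorem stmt_11 (p m : ℕ) (hp : p.Prime) (hodd : p ≠ 2) (hm : m ≠ 0)
    (F : Type) [Field F] [Fintype F] (hcard : Fintype.card F = p ^ m)
    (d : ℕ) (hd : d = if p ^ m % 4 = 1 then (p ^ m - 1) / 4 else (p ^ m + 1) / 4)
    (β : F) (hβ : β ≠ 0) :
    (Finset.univ.filter (fun xy : F × F =>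
        xy.1 ≠ 0 ∧ xy.2 ≠ 0 ∧ xy.1 + xy.2 = β ∧
        ((IsSquare xy.1 ∧ ¬ IsSquare xy.2) ∨ (¬ IsSquare xy.1 ∧ IsSquare xy.2)))).card
      = p ^ m - 1 - 2 * d := by
  classical
  set q := Fintype.card F with hq
  have hchar : ringChar F ≠ 2 := by
    have hcp : CharP F (ringChar F) := ringChar.charP F
    obtain ⟨n, hrp, hn⟩ := FiniteField.card F (ringChar F)
    intro h2
    rw [hq] at hcard
    have h2d : (2 : ℕ) ∣ p ^ m := by
      rw [← hcard, hn, h2]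
      exact dvd_pow_self 2 (by positivity)
    exact hodd ((Nat.Prime.dvd_of_dvd_pow Nat.prime_two h2d
      |> (Nat.prime_dvd_prime_iff_eq Nat.prime_two hp).mp).symm)
  set χ := quadraticChar F with hχ
  have hχq : (quadraticChar F).IsQuadratic := quadraticChar_isQuadratic F
  have hJ : ∑ x : F, χ x * χ (1 - x) = -χ (-1) := by
    have h := jacobiSum_nontrivial_inv (quadraticChar_ne_one hchar)
    rwa [hχq.inv, jacobiSum] at h
  have hsum : ∑ x : F, χ x * χ (β - x) = -χ (-1) := by
    calc ∑ x : F, χ x * χ (β - x) = ∑ x : F, χ (β * x) * χ (β - β * x) :=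
          (Fintype.sum_bijective (β * ·) (Equiv.mulLeft₀ β hβ).bijective _ _ (fun x => rfl)).symm
      _ = ∑ x : F, χ x * χ (1 - x) := by
          refine Fintype.sum_congr _ _ fun x => ?_
          have h1 : β - β * x = β * (1 - x) := by ring
          calc χ (β * x) * χ (β - β * x) = χ β ^ 2 * (χ x * χ (1 - x)) := by
                rw [h1, map_mul, map_mul]; ring
            _ = χ x * χ (1 - x) := by rw [hχ, quadraticChar_sq_one hβ, one_mul]
      _ = -χ (-1) := hJ
  set S : Finset F := univ.filter (fun x : F => x ≠ 0 ∧ β - x ≠ 0 ∧ χ x * χ (β - x) = -1) with hS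
  set B : Finset F := univ.filter (fun x : F => x ≠ 0 ∧ β - x ≠ 0 ∧ χ x * χ (β - x) = 1) with hB
  have hsum2 : ∑ x : F, χ x * χ (β - x) = (B.card : ℤ) - S.card := by
    have hpt : ∀ x : F, χ x * χ (β - x) =
        (if x ∈ B then (1 : ℤ) else 0) + (if x ∈ S then (-1 : ℤ) else 0) := by
      intro x
      by_cases h0 : x = 0
      · simp [hB, hS, h0, hχ, quadraticChar_zero]
      by_cases h1 : β - x = 0
      · simp [hB, hS, h1, h0, hχ, quadraticChar_zero]
      rcases quadraticChar_dichotomy (F := F) h0 with hc | hc <;>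
        rcases quadraticChar_dichotomy (F := F) h1 with hc' | hc'
      · have hprod : χ x * χ (β - x) = 1 := by rw [hχ, hc, hc']; ring
        rw [hprod, if_pos (by simp [hB, h0, h1, hprod]),
          if_neg (by simp [hS, hprod])]
        norm_num
      · have hprod : χ x * χ (β - x) = -1 := by rw [hχ, hc, hc']; ring
        rw [hprod, if_neg (by simp [hB, hprod]),
          if_pos (by simp [hS, h0, h1, hprod])]
        norm_num
      · have hprod : χ x * χ (β - x) = -1 := by rw [hχ, hc, hc']; ring
        rw [hprod, if_neg (by simp [hB, hprod]),
          if_pos (by simp [hS, h0, h1, hprod])]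
        norm_num
      · have hprod : χ x * χ (β - x) = 1 := by rw [hχ, hc, hc']; ring
        rw [hprod, if_pos (by simp [hB, h0, h1, hprod]),
          if_neg (by simp [hS, hprod])]
        norm_num
    rw [Fintype.sum_congr _ _ hpt, Finset.sum_add_distrib]
    simp [Finset.sum_ite_mem]
    ring
  have hBS : B.card + S.card = q - 2 := by
    have hdisj : Disjoint B S := by
      rw [Finset.disjoint_left]
      intro a haB haS
      simp only [hB, hS, mem_filter] at haB haS
      omega
    have hunion : B ∪ S = univ \ {0, β} := by
      ext x
      constructor
      · intro hx
        rcases Finset.mem_union.mp hx with h | h <;>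
        · simp only [hB, hS, mem_filter] at h
          obtain ⟨-, h0, h1, -⟩ := h
          refine Finset.mem_sdiff.mpr ⟨mem_univ x, ?_⟩
          simp only [mem_insert, mem_singleton]
          push_neg
          exact ⟨h0, fun h => h1 (by rw [h]; ring)⟩
      · intro hx
        obtain ⟨-, hx⟩ := Finset.mem_sdiff.mp hx
        simp only [mem_insert, mem_singleton] at hx
        push_neg at hx
        have h0 : x ≠ 0 := hx.1
        have h1 : β - x ≠ 0 := sub_ne_zero.mpr (Ne.symm hx.2)
        rcases quadraticChar_dichotomy (F := F) h0 with hc | hc <;>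
          rcases quadraticChar_dichotomy (F := F) h1 with hc' | hc'
        · exact Finset.mem_union.mpr (Or.inl (Finset.mem_filter.mpr
            ⟨mem_univ x, h0, h1, by rw [hχ, hc, hc']; ring⟩))
        · exact Finset.mem_union.mpr (Or.inr (Finset.mem_filter.mpr
            ⟨mem_univ x, h0, h1, by rw [hχ, hc, hc']; ring⟩))
        · exact Finset.mem_union.mpr (Or.inr (Finset.mem_filter.mpr
            ⟨mem_univ x, h0, h1, by rw [hχ, hc, hc']; ring⟩))
        · exact Finset.mem_union.mpr (Or.inl (Finset.mem_filter.mpr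
            ⟨mem_univ x, h0, h1, by rw [hχ, hc, hc']; ring⟩))
    have hcardU : (univ \ ({0, β} : Finset F)).card = q - 2 := by
      rw [Finset.card_sdiff_of_subset (by simp), Finset.card_univ,
        Finset.card_insert_of_notMem (by simpa using (Ne.symm hβ)), Finset.card_singleton]
    rw [← Finset.card_union_of_disjoint hdisj, hunion, hcardU]
  have hpair : (Finset.univ.filter (fun xy : F × F =>
        xy.1 ≠ 0 ∧ xy.2 ≠ 0 ∧ xy.1 + xy.2 = β ∧
        ((IsSquare xy.1 ∧ ¬ IsSquare xy.2) ∨ (¬ IsSquare xy.1 ∧ IsSquare xy.2)))).card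
      = S.card := by
    apply Finset.card_bij (fun xy _ => xy.1)
    · rintro ⟨x, y⟩ hxy
      simp only [mem_filter, mem_univ, true_and] at hxy
      obtain ⟨h1, h2, h3, h4⟩ := hxy
      have hy : y = β - x := by rw [← h3]; ring
      have h2' : β - x ≠ 0 := by rw [← hy]; exact h2
      refine Finset.mem_filter.mpr ⟨mem_univ x, h1, h2', ?_⟩
      rw [hχ, mixed_iff h1 h2']
      rw [← hy]; exact h4
    · rintro ⟨x, y⟩ hxy ⟨x', y'⟩ hxy' h
      simp only [mem_filter, mem_univ, true_and] at hxy hxy'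
      simp only at h
      have hyy : y = y' := by
        have e1 := hxy.2.2.1; have e2 := hxy'.2.2.1
        subst h; linear_combination e1 - e2
      simp [h, hyy]
    · intro x hx
      simp only [hS, mem_filter, mem_univ, true_and] at hx
      obtain ⟨h0, h1, h2⟩ := hx
      refine ⟨(x, β - x), ?_, rfl⟩
      refine Finset.mem_filter.mpr ⟨mem_univ _, h0, h1, by ring, ?_⟩
      rw [hχ] at h2
      exact (mixed_iff h0 h1).mp h2
  have hqodd : q % 2 = 1 := by
    rw [hcard]
    exact Nat.odd_iff.mp (hp.odd_of_ne_two hodd).pow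
  have hq3 : 3 ≤ q := by
    rw [hcard]
    have h2 : 2 ≤ p := hp.two_le
    have h3 : 3 ≤ p := by
      rcases Nat.lt_or_ge p 3 with h | h
      · interval_cases p <;> simp_all
      · exact h
    calc 3 ≤ p ^ 1 := by simpa
      _ ≤ p ^ m := Nat.pow_le_pow_right (by omega) (by omega)
  have hval : χ (-1) = if q % 4 = 1 then 1 else -1 := by
    rw [hχ, quadraticChar_neg_one hchar, ← hq]
    rcases Nat.odd_mod_four_iff.mp hqodd with h | h
    · rw [if_pos h]; exact ZMod.χ₄_nat_one_mod_four h
    · rw [if_neg (by omega)]; exact ZMod.χ₄_nat_three_mod_four h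
  rw [hpair]
  rw [hsum2] at hsum
  have hScard : (S.card : ℤ) * 2 = (q : ℤ) - 2 + χ (-1) := by omega
  rcases Nat.odd_mod_four_iff.mp hqodd with h | h
  · rw [hval, if_pos h] at hScard
    have hpm : p ^ m % 4 = 1 := by rw [← hcard]; exact h
    have hd' : d = (p ^ m - 1) / 4 := by rw [hd, if_pos hpm]
    have hq' : q = p ^ m := hcard
    omega
  · rw [hval, if_neg (by omega)] at hScard
    have hpm : p ^ m % 4 = 3 := by rw [← hcard]; exact h
    have hd' : d = (p ^ m + 1) / 4 := by rw [hd, if_neg (by omega)]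
    have hq' : q = p ^ m := hcard
    omega
end

section
/- Let p be an odd prime and R_k = F_{p^m}[x_1,…,x_m] / ⟨∏_{j=1}^m (x_j − 1)^k⟩ for k ≥ 1. Then every invertible element of R_k has at most two square roots in R_k. -/
set_option maxHeartbeats 1000000
set_option synthInstance.maxHeartbeats 400000

open MvPolynomial

lemma my_prime_X_sub_one {K : Type*} [Field K] {n : ℕ} (j : Fin (n + 1)) :
    Prime (X j - 1 : MvPolynomial (Fin (n + 1)) K) := by
  let e : MvPolynomial (Fin (n + 1)) K ≃ₐ[K] Polynomial (MvPolynomial (Fin n) K) :=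
    (renameEquiv K (finSuccEquiv' j)).trans (optionEquivLeft K (Fin n))
  have h : e (X j - 1) = Polynomial.X - Polynomial.C 1 := by
    have : e (X j) = Polynomial.X := by
      simp [e, renameEquiv_apply, rename_X, finSuccEquiv'_at, optionEquivLeft_X_none]
    rw [map_sub, this, map_one]
    simp
  have := (Polynomial.prime_X_sub_C (1 : MvPolynomial (Fin n) K))
  rw [← MulEquiv.prime_iff e.toMulEquiv]
  show Prime (e (X j - 1))
  rw [h]
  simpa using this

lemma my_X_sub_one_not_dvd {K : Type*} [Field K] {n : ℕ} {i j : Fin n} (hij : i ≠ j) :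
    ¬ (X i - 1 : MvPolynomial (Fin n) K) ∣ (X j - 1) := by
  intro ⟨q, hq⟩
  have := congrArg (aeval (fun l : Fin n => if l = i then (1 : MvPolynomial (Fin n) K) else X l)) hq
  simp [aeval_X, hij.symm, sub_mul] at this
  have h0 := congrArg (eval (fun _ : Fin n => (0 : K))) this
  simp at h0

lemma my_prod_pow_dvd {R : Type*} [CommRing R] [IsDomain R] {ι : Type*} [DecidableEq ι]
    (P : ι → R) (hP : ∀ i, Prime (P i)) (hne : ∀ i j, i ≠ j → ¬ P i ∣ P j) (k : ℕ)
    (s : Finset ι) : ∀ A B : R, (∀ i ∈ s, ¬ P i ∣ B) → (∏ i ∈ s, P i) ^ k ∣ A * B →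
      (∏ i ∈ s, P i) ^ k ∣ A := by
  induction s using Finset.induction with
  | empty => intro A B _ h; simp
  | @insert a s ha ih =>
    intro A B hB h
    rw [Finset.prod_insert ha, mul_pow] at h ⊢
    have hpa : (P a) ^ k ∣ A * B :=
      dvd_trans (dvd_mul_right _ _) h
    obtain ⟨A', rfl⟩ := (hP a).pow_dvd_of_dvd_mul_right k (hB a (Finset.mem_insert_self a s)) hpa
    have hq : (∏ i ∈ s, P i) ^ k ∣ A' * (P a ^ k * B) := by
      have : P a ^ k * A' * B = A' * (P a ^ k * B) := by ring
      exact this ▸ (dvd_trans (dvd_mul_left _ _) h)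
    have hB' : ∀ i ∈ s, ¬ P i ∣ P a ^ k * B := by
      intro i hi hd
      rcases (hP i).2.2 _ _ hd with h1 | h2
      · exact hne i a (fun he => ha (he ▸ hi)) ((hP i).dvd_of_dvd_pow h1)
      · exact hB i (Finset.mem_insert_of_mem hi) h2
    exact mul_dvd_mul_left _ (ih A' (P a ^ k * B) hB' hq)

lemma my_two_ne_zero (p m : ℕ) [Fact (Nat.Prime p)] (hodd : p ≠ 2) :
    (2 : GaloisField p m) ≠ 0 := by
  have hp : Nat.Prime p := Fact.out
  have : ¬ (p : ℕ) ∣ 2 := by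
    intro h
    exact hodd ((Nat.prime_dvd_prime_iff_eq hp Nat.prime_two).mp h)
  have := (CharP.cast_eq_zero_iff (GaloisField p m) p 2).not.mpr this
  simpa using this

lemma my_sqrt_one (p m k : ℕ) [Fact (Nat.Prime p)] (hodd : p ≠ 2) (hm : m ≠ 0) (hk : 1 ≤ k)
    (v : MvPolynomial (Fin m) (GaloisField p m) ⧸
      Ideal.span {(∏ j : Fin m, (MvPolynomial.X j - 1 : MvPolynomial (Fin m) (GaloisField p m))) ^ k})
    (hv : v ^ 2 = 1) : v = 1 ∨ v = -1 := by
  obtain ⟨n, rfl⟩ := Nat.exists_eq_succ_of_ne_zero hm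
  obtain ⟨V, rfl⟩ := Ideal.Quotient.mk_surjective v
  have hdvd : (∏ j : Fin (n + 1), (X j - 1 : MvPolynomial (Fin (n + 1)) (GaloisField p (n + 1)))) ^ k
      ∣ V ^ 2 - 1 := by
    rw [← Ideal.mem_span_singleton, ← Ideal.Quotient.eq_zero_iff_mem, map_sub, map_pow, map_one,
      hv, sub_self]
  have hεP : ∀ j : Fin (n + 1),
      eval (fun _ : Fin (n + 1) => (1 : GaloisField p (n + 1))) (X j - 1) = 0 := by
    intro j; simp
  have hεG : eval (fun _ : Fin (n + 1) => (1 : GaloisField p (n + 1)))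
      (∏ j : Fin (n + 1), (X j - 1)) = 0 := by
    rw [map_prod]
    exact Finset.prod_eq_zero (Finset.mem_univ 0) (hεP 0)
  have ht : (eval (fun _ : Fin (n + 1) => (1 : GaloisField p (n + 1))) V) ^ 2 = 1 := by
    obtain ⟨h, hh⟩ := hdvd
    have := congrArg (eval (fun _ : Fin (n + 1) => (1 : GaloisField p (n + 1)))) hh
    rw [map_sub, map_pow, map_one, map_mul, map_pow, hεG, zero_pow (by omega), zero_mul,
      sub_eq_zero] at this
    exact this
  have h2 : (2 : GaloisField p (n + 1)) ≠ 0 := my_two_ne_zero p (n + 1) hodd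
  set t := eval (fun _ : Fin (n + 1) => (1 : GaloisField p (n + 1))) V with htdef
  have hfact : (t - 1) * (t + 1) = 0 := by linear_combination ht
  rcases mul_eq_zero.mp hfact with h1 | h1
  · -- t = 1, show v = 1
    left
    have ht1 : t = 1 := sub_eq_zero.mp h1
    have hnd : ∀ j : Fin (n + 1),
        ¬ (X j - 1 : MvPolynomial (Fin (n + 1)) (GaloisField p (n + 1))) ∣ (V + 1) := by
      intro j ⟨q, hq⟩
      have := congrArg (eval (fun _ : Fin (n + 1) => (1 : GaloisField p (n + 1)))) hq
      rw [map_add, map_one, map_mul, hεP j, zero_mul, ← htdef, ht1] at this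
      exact h2 (by linear_combination this)
    have hfin : (∏ j : Fin (n + 1),
        (X j - 1 : MvPolynomial (Fin (n + 1)) (GaloisField p (n + 1)))) ^ k ∣ V - 1 := by
      apply my_prod_pow_dvd (fun j : Fin (n + 1) => (X j - 1))
        (fun j => my_prime_X_sub_one j) (fun i j hij => my_X_sub_one_not_dvd hij) k
        Finset.univ (V - 1) (V + 1) (fun j _ => hnd j)
      rw [show (V - 1) * (V + 1) = V ^ 2 - 1 by ring]; exact hdvd
    rw [show (1 : MvPolynomial (Fin (n + 1)) (GaloisField p (n + 1)) ⧸ _) =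
      Ideal.Quotient.mk _ 1 from (map_one _).symm, Ideal.Quotient.eq]
    exact Ideal.mem_span_singleton.mpr hfin
  · -- t = -1, show v = -1
    right
    have ht1 : t = -1 := eq_neg_of_add_eq_zero_left h1
    have hnd : ∀ j : Fin (n + 1),
        ¬ (X j - 1 : MvPolynomial (Fin (n + 1)) (GaloisField p (n + 1))) ∣ (V - 1) := by
      intro j ⟨q, hq⟩
      have := congrArg (eval (fun _ : Fin (n + 1) => (1 : GaloisField p (n + 1)))) hq
      rw [map_sub, map_one, map_mul, hεP j, zero_mul, ← htdef, ht1] at this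
      exact h2 (by linear_combination -this)
    have hfin : (∏ j : Fin (n + 1),
        (X j - 1 : MvPolynomial (Fin (n + 1)) (GaloisField p (n + 1)))) ^ k ∣ V + 1 := by
      apply my_prod_pow_dvd (fun j : Fin (n + 1) => (X j - 1))
        (fun j => my_prime_X_sub_one j) (fun i j hij => my_X_sub_one_not_dvd hij) k
        Finset.univ (V + 1) (V - 1) (fun j _ => hnd j)
      rw [show (V + 1) * (V - 1) = V ^ 2 - 1 by ring]; exact hdvd
    rw [show (-1 : MvPolynomial (Fin (n + 1)) (GaloisField p (n + 1)) ⧸ _) =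
      Ideal.Quotient.mk _ (-1) from by rw [map_neg, map_one], Ideal.Quotient.eq]
    rw [sub_neg_eq_add]
    exact Ideal.mem_span_singleton.mpr hfin

theorem stmt_13 (p m k : ℕ) [Fact (Nat.Prime p)] (hodd : p ≠ 2) (hm : m ≠ 0) (hk : 1 ≤ k)
    (u a b c : MvPolynomial (Fin m) (GaloisField p m) ⧸
      Ideal.span {(∏ j : Fin m, (MvPolynomial.X j - 1 : MvPolynomial (Fin m) (GaloisField p m))) ^ k})
    (hu : IsUnit u) (ha : a ^ 2 = u) (hb : b ^ 2 = u) (hc : c ^ 2 = u) :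
    a = b ∨ a = c ∨ b = c := by
  have key : ∀ x y : MvPolynomial (Fin m) (GaloisField p m) ⧸
      Ideal.span {(∏ j : Fin m, (MvPolynomial.X j - 1 :
        MvPolynomial (Fin m) (GaloisField p m))) ^ k},
      IsUnit y → x ^ 2 = y ^ 2 → x = y ∨ x = -y := by
    intro x y hy hxy
    obtain ⟨w, rfl⟩ := hy
    have hv : (x * ↑w⁻¹) ^ 2 = 1 := by
      rw [mul_pow, hxy, ← mul_pow]
      simp
    rcases my_sqrt_one p m k hodd hm hk _ hv with h | h
    · exact Or.inl (Units.mul_inv_eq_one.mp h)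
    · right
      rw [Units.mul_inv_eq_iff_eq_mul] at h
      rw [h]; ring
  have hub : IsUnit b := by
    have : IsUnit (b ^ 2) := hb ▸ hu
    exact (isUnit_pow_iff (two_ne_zero)).mp this
  have huc : IsUnit c := by
    have : IsUnit (c ^ 2) := hc ▸ hu
    exact (isUnit_pow_iff (two_ne_zero)).mp this
  rcases key a b hub (ha.trans hb.symm) with h1 | h1
  · exact Or.inl h1
  rcases key b c huc (hb.trans hc.symm) with h2 | h2
  · exact Or.inr (Or.inr h2)
  · refine Or.inr (Or.inl ?_)
    rw [h1, h2, neg_neg]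
end
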